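/- Let F be a field, n ≥ 1, t ≥ 1, and let U and V be MDS linear codes in F^n with dim U = t + 1 and dim V = t. Let C be any nonzero linear code in F^n such that C is orthogonal to U*V, i.e. C ⊆ (U*V)^⊥. Then the minimum distance of C satisfies d(C) ≥ 2t + 1, and (U, V) is a t-error correcting pair for C. -/

import Mathlib

open Finset

noncomputable section

/-- The componentwise (star) product on `Fin n → F`. -/
def starMul {F : Type*} [Mul F] {n : ℕ} (u v : Fin n → F) : Fin n → F :=
  fun i => u i * v i

/-- The standard bilinear form `⟨u,v⟩ = ∑ i, u i * v i` on `Fin n → F`. -/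
def bil {F : Type*} [Semiring F] {n : ℕ} (u v : Fin n → F) : F :=
  ∑ i, u i * v i

/-- The Hamming weight of a vector: the number of its nonzero coordinates. -/
def hWeight {F : Type*} [Zero F] {n : ℕ} (v : Fin n → F) : ℕ :=
  Set.ncard {i | v i ≠ 0}

/-- The dual code of a linear code `C ⊆ F^n` with respect to `⟨u,v⟩ = ∑ i, u i * v i`. -/
def dualCode {F : Type*} [Field F] {n : ℕ} (C : Submodule F (Fin n → F)) :
    Submodule F (Fin n → F) where
  carrier := {x | ∀ c ∈ C, bil x c = 0}
  zero_mem' := by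
    intro c hc
    simp [bil]
  add_mem' := by
    intro a b ha hb c hc
    have h : bil (a + b) c = bil a c + bil b c := by
      simp only [bil, Pi.add_apply, add_mul]
      exact Finset.sum_add_distrib
    simp only [Set.mem_setOf_eq] at ha hb ⊢
    rw [h, ha c hc, hb c hc, add_zero]
  smul_mem' := by
    intro r a ha c hc
    have h : bil (r • a) c = r * bil a c := by
      simp only [bil, Pi.smul_apply, smul_eq_mul, Finset.mul_sum, mul_assoc]
    simp only [Set.mem_setOf_eq] at ha ⊢
    rw [h, ha c hc, mul_zero]

/-- The minimum distance of a code: the least Hamming weight of a nonzero codeword. -/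
def minDist {F : Type*} [Field F] {n : ℕ} (C : Submodule F (Fin n → F)) : ℕ :=
  sInf {d | ∃ c ∈ C, c ≠ 0 ∧ hWeight c = d}

/-- A code is MDS if its minimum distance equals `n - dim + 1`. -/
def IsMDS {F : Type*} [Field F] {n : ℕ} (C : Submodule F (Fin n → F)) : Prop :=
  minDist C = n - Module.finrank F C + 1

/-- `U*V`: the span of all componentwise products `u*v` with `u ∈ U`, `v ∈ V`. -/
def starSpan {F : Type*} [Field F] {n : ℕ} (U V : Submodule F (Fin n → F)) :
    Submodule F (Fin n → F) :=
  Submodule.span F {w | ∃ u ∈ U, ∃ v ∈ V, w = starMul u v}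

/-- `(U, V)` is a `t`-error correcting pair for `C`. -/
def IsECP {F : Type*} [Field F] {n : ℕ} (t : ℕ) (U V C : Submodule F (Fin n → F)) : Prop :=
  starSpan U V ≤ dualCode C ∧
  t < Module.finrank F U ∧
  n < minDist U + minDist C ∧
  t < minDist (dualCode V)

attribute [local instance] Classical.propDecidable

lemma hWeight_eq_card {F : Type*} [Zero F] {n : ℕ} (v : Fin n → F) :
    hWeight v = #(univ.filter fun i => v i ≠ 0) := by
  rw [hWeight, ← Set.ncard_coe_finset]
  congr 1
  ext i
  simp

lemma hWeight_le {F : Type*} [Zero F] {n : ℕ} (v : Fin n → F) (S : Finset (Fin n))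
    (h : ∀ i, v i ≠ 0 → i ∈ S) : hWeight v ≤ #S := by
  rw [hWeight_eq_card]
  apply Finset.card_le_card
  intro i hi
  exact h i (by simpa using hi)

lemma bil_comm {F : Type*} [CommSemiring F] {n : ℕ} (u v : Fin n → F) :
    bil u v = bil v u := by
  simp only [bil, mul_comm]

lemma bil_add_left {F : Type*} [Semiring F] {n : ℕ} (a b v : Fin n → F) :
    bil (a + b) v = bil a v + bil b v := by
  simp only [bil, Pi.add_apply, add_mul]
  exact Finset.sum_add_distrib

lemma bil_smul_left {F : Type*} [Semiring F] {n : ℕ} (r : F) (a v : Fin n → F) :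
    bil (r • a) v = r * bil a v := by
  simp only [bil, Pi.smul_apply, smul_eq_mul, Finset.mul_sum, mul_assoc]

lemma bil_add_right {F : Type*} [CommSemiring F] {n : ℕ} (x a b : Fin n → F) :
    bil x (a + b) = bil x a + bil x b := by
  rw [bil_comm, bil_add_left, bil_comm a x, bil_comm b x]

lemma bil_smul_right {F : Type*} [CommSemiring F] {n : ℕ} (r : F) (x a : Fin n → F) :
    bil x (r • a) = r * bil x a := by
  rw [bil_comm, bil_smul_left, bil_comm a x]

/-- The pairing map `F^n → Dual(V)`, `x ↦ (v ↦ ⟨x,v⟩)`. -/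
def pairMap {F : Type*} [Field F] {n : ℕ} (V : Submodule F (Fin n → F)) :
    (Fin n → F) →ₗ[F] (↥V →ₗ[F] F) where
  toFun x :=
    { toFun := fun v => bil x v.1
      map_add' := fun a b => by simpa using bil_add_right x a.1 b.1
      map_smul' := fun r a => by simpa using bil_smul_right r x a.1 }
  map_add' x y := LinearMap.ext fun v => bil_add_left x y v.1
  map_smul' r x := LinearMap.ext fun v => bil_smul_left r x v.1

/-- The dual code of a code of dimension `t < n` contains a nonzero vector. -/
lemma exists_ne_zero_mem_dualCode {F : Type*} [Field F] {n t : ℕ}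
    (V : Submodule F (Fin n → F)) (hVdim : Module.finrank F V = t) (htn : t < n) :
    ∃ x, x ∈ dualCode V ∧ x ≠ 0 := by
  have hrn := LinearMap.finrank_range_add_finrank_ker (pairMap V)
  have hdom : Module.finrank F (Fin n → F) = n := Module.finrank_fin_fun F
  have hrange : Module.finrank F (LinearMap.range (pairMap V)) ≤ t := by
    calc Module.finrank F (LinearMap.range (pairMap V))
        ≤ Module.finrank F (↥V →ₗ[F] F) := Submodule.finrank_le _
      _ = Module.finrank F ↥V := Subspace.dual_finrank_eq
      _ = t := hVdim
  have hker : LinearMap.ker (pairMap V) ≠ ⊥ := by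
    intro h
    rw [h, finrank_bot] at hrn
    omega
  obtain ⟨x, hx, hx0⟩ := Submodule.ne_bot_iff _ |>.mp hker
  refine ⟨x, ?_, hx0⟩
  intro v hv
  exact DFunLike.congr_fun (LinearMap.mem_ker.mp hx) ⟨v, hv⟩

/-- Interpolation: an "MDS-like" code of dimension `k` hits any target on any `≤ k` coords. -/
lemma interpolate {F : Type*} [Field F] {n k : ℕ} (W : Submodule F (Fin n → F))
    (hk : Module.finrank F W = k)
    (hmin : ∀ w ∈ W, w ≠ 0 → n - k + 1 ≤ hWeight w)
    (S : Finset (Fin n)) (hS : #S ≤ k) (g : Fin n → F) :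
    ∃ w ∈ W, ∀ i ∈ S, w i = g i := by
  have hkn : k ≤ n := by
    rw [← hk]
    simpa using (Submodule.finrank_le W).trans_eq (Module.finrank_fin_fun F)
  obtain ⟨S', hSS', hS'⟩ := Finset.exists_superset_card_eq hS (by simpa using hkn)
  set π : W →ₗ[F] (↥S' → F) :=
    (LinearMap.funLeft F F (fun i : ↥S' => (i : Fin n))).comp W.subtype with hπ
  have hinj : Function.Injective π := by
    rw [← LinearMap.ker_eq_bot]
    rw [Submodule.eq_bot_iff]
    intro w hw
    by_contra h0
    have hwz : ∀ i ∈ S', (w : Fin n → F) i = 0 := by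
      intro i hi
      have := congrFun (LinearMap.mem_ker.mp hw) ⟨i, hi⟩
      simpa [hπ, LinearMap.funLeft] using this
    have hsupp : ∀ i, (w : Fin n → F) i ≠ 0 → i ∈ S'ᶜ := by
      intro i hi
      simp only [Finset.mem_compl]
      exact fun h => hi (hwz i h)
    have h1 : hWeight (w : Fin n → F) ≤ n - k := by
      have := hWeight_le _ _ hsupp
      rwa [Finset.card_compl, Fintype.card_fin, hS'] at this
    have h2 : (w : Fin n → F) ≠ 0 := by
      intro h
      exact h0 (Subtype.ext h)
    have := hmin w w.2 h2
    omega
  have hsurj : Function.Surjective π := by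
    have hd : Module.finrank F W = Module.finrank F (↥S' → F) := by
      rw [hk, Module.finrank_pi, Fintype.card_coe, hS']
    exact (LinearMap.injective_iff_surjective_of_finrank_eq_finrank hd).mp hinj
  obtain ⟨w, hw⟩ := hsurj (fun i => g i)
  refine ⟨w, w.2, fun i hi => ?_⟩
  have := congrFun hw ⟨i, hSS' hi⟩
  simpa [hπ, LinearMap.funLeft] using this

/-- Duursma–Kötter: if `U`, `V` are MDS of dimensions `t+1`, `t` and the
nonzero code `C` satisfies `C ⊆ (U*V)^⊥`, then `d(C) ≥ 2t+1` and `(U,V)` is a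
`t`-error correcting pair for `C`. -/
theorem stmt11 {F : Type*} [Field F] (n t : ℕ) (hn : 1 ≤ n) (ht : 1 ≤ t)
    (U V C : Submodule F (Fin n → F))
    (hUMDS : IsMDS U) (hUdim : Module.finrank F U = t + 1)
    (hVMDS : IsMDS V) (hVdim : Module.finrank F V = t)
    (hC : C ≤ dualCode (starSpan U V)) (hC0 : C ≠ ⊥) :
    2 * t + 1 ≤ minDist C ∧ IsECP t U V C := by
  have htn : t + 1 ≤ n := by
    rw [← hUdim]
    simpa using (Submodule.finrank_le U).trans_eq (Module.finrank_fin_fun F)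
  -- minimum-weight lower bounds from MDS
  have hminU : ∀ u ∈ U, u ≠ 0 → n - (t + 1) + 1 ≤ hWeight u := by
    intro u hu h0
    have h1 : minDist U ≤ hWeight u := Nat.sInf_le ⟨u, hu, h0, rfl⟩
    rw [hUMDS, hUdim] at h1
    exact h1
  have hminV : ∀ v ∈ V, v ≠ 0 → n - t + 1 ≤ hWeight v := by
    intro v hv h0
    have h1 : minDist V ≤ hWeight v := Nat.sInf_le ⟨v, hv, h0, rfl⟩
    rw [hVMDS, hVdim] at h1
    exact h1
  have interpU := interpolate U hUdim hminU
  have interpV := interpolate V hVdim hminV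
  -- the key weight bound for C
  have key : ∀ c ∈ C, c ≠ 0 → 2 * t + 1 ≤ hWeight c := by
    intro c hc h0
    by_contra hlt
    push_neg at hlt
    have hw : hWeight c ≤ 2 * t := by omega
    set T : Finset (Fin n) := univ.filter (fun i => c i ≠ 0) with hTdef
    have hTcard : #T ≤ 2 * t := by
      rw [← hWeight_eq_card] at *
      exact hw
    obtain ⟨i0, hi0⟩ : ∃ i0, c i0 ≠ 0 := Function.ne_iff.mp h0
    have hi0T : i0 ∈ T := by simp [hTdef, hi0]
    set T' := T.erase i0 with hT'def
    have hT'card : #T' ≤ 2 * t - 1 := by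
      rw [hT'def, Finset.card_erase_of_mem hi0T]
      omega
    obtain ⟨A, hAT', hAcard⟩ := Finset.exists_subset_card_eq (s := T') (n := min t #T') (min_le_right _ _)
    set B := T' \ A with hBdef
    have hBcard : #B ≤ t - 1 := by
      rw [hBdef, Finset.card_sdiff_of_subset hAT']
      rcases le_or_gt #T' t with h | h
      · simp only [hAcard]
        omega
      · simp only [hAcard]
        omega
    set g : Fin n → F := fun i => if i = i0 then 1 else 0 with hgdef
    obtain ⟨u, hu, hug⟩ := interpU (insert i0 A) (by
      have := Finset.card_insert_le i0 A
      omega) g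
    obtain ⟨v, hv, hvg⟩ := interpV (insert i0 B) (by
      have := Finset.card_insert_le i0 B
      omega) g
    have hbil : bil c (starMul u v) = 0 :=
      hC hc _ (Submodule.subset_span ⟨u, hu, v, hv, rfl⟩)
    have hsum : bil c (starMul u v) = c i0 := by
      rw [bil]
      rw [Finset.sum_eq_single i0]
      · have hu0 : u i0 = 1 := by
          rw [hug i0 (Finset.mem_insert_self _ _), hgdef]
          simp
        have hv0 : v i0 = 1 := by
          rw [hvg i0 (Finset.mem_insert_self _ _), hgdef]
          simp
        simp [starMul, hu0, hv0]
      · intro j _ hj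
        by_cases hcj : c j = 0
        · simp [hcj]
        · have hjT' : j ∈ T' := by
            simp [hT'def, hTdef, hj, hcj]
          rcases Finset.mem_union.mp (show j ∈ A ∪ B by
            rw [Finset.union_sdiff_of_subset hAT']
            exact hjT') with hjA | hjB
          · have : u j = 0 := by
              rw [hug j (Finset.mem_insert_of_mem hjA), hgdef]
              simp [hj]
            simp [starMul, this]
          · have : v j = 0 := by
              rw [hvg j (Finset.mem_insert_of_mem hjB), hgdef]
              simp [hj]
            simp [starMul, this]
      · intro h
        exact absurd (Finset.mem_univ i0) h
    exact hi0 (by rw [← hsum, hbil])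
  -- distance bound for C
  have hCset : {d | ∃ c ∈ C, c ≠ 0 ∧ hWeight c = d}.Nonempty := by
    obtain ⟨c, hc, h0⟩ := Submodule.ne_bot_iff C |>.mp hC0
    exact ⟨hWeight c, c, hc, h0, rfl⟩
  have hdC : 2 * t + 1 ≤ minDist C := by
    apply le_csInf hCset
    rintro d ⟨c, hc, h0, rfl⟩
    exact key c hc h0
  refine ⟨hdC, ?_, ?_, ?_, ?_⟩
  · -- U*V ⊆ C^⊥
    rw [starSpan, Submodule.span_le]
    rintro w ⟨u, hu, v, hv, rfl⟩
    intro c hc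
    rw [bil_comm]
    exact hC hc _ (Submodule.subset_span ⟨u, hu, v, hv, rfl⟩)
  · rw [hUdim]; omega
  · -- n < d(U) + d(C)
    have : minDist U = n - (t + 1) + 1 := by rw [hUMDS, hUdim]
    omega
  · -- t < d(V^⊥)
    -- every nonzero element of the dual of V has weight ≥ t+1
    have hdual : ∀ x ∈ dualCode V, x ≠ 0 → t + 1 ≤ hWeight x := by
      intro x hx h0
      by_contra hlt
      push_neg at hlt
      have hwx : hWeight x ≤ t := by omega
      set S : Finset (Fin n) := univ.filter (fun i => x i ≠ 0) with hSdef
      have hScard : #S ≤ t := by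
        rw [← hWeight_eq_card] at *
        exact hwx
      obtain ⟨i0, hi0⟩ : ∃ i0, x i0 ≠ 0 := Function.ne_iff.mp h0
      have hi0S : i0 ∈ S := by simp [hSdef, hi0]
      set g : Fin n → F := fun i => if i = i0 then 1 else 0 with hgdef
      obtain ⟨v, hv, hvg⟩ := interpV S hScard g
      have hbil : bil x v = 0 := hx v hv
      have hsum : bil x v = x i0 := by
        rw [bil]
        rw [Finset.sum_eq_single i0]
        · have : v i0 = 1 := by
            rw [hvg i0 hi0S, hgdef]
            simp
          simp [this]
        · intro j _ hj
          by_cases hxj : x j = 0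
          · simp [hxj]
          · have hjS : j ∈ S := by simp [hSdef, hxj]
            have : v j = 0 := by
              rw [hvg j hjS, hgdef]
              simp [hj]
            simp [this]
        · intro h
          exact absurd (Finset.mem_univ i0) h
      exact hi0 (by rw [← hsum, hbil])
    obtain ⟨x, hx, hx0⟩ := exists_ne_zero_mem_dualCode V hVdim (by omega)
    have hne : {d | ∃ c ∈ dualCode V, c ≠ 0 ∧ hWeight c = d}.Nonempty :=
      ⟨hWeight x, x, hx, hx0, rfl⟩
    have : t + 1 ≤ minDist (dualCode V) := by
      apply le_csInf hne
      rintro d ⟨c, hc, h0, rfl⟩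
      exact hdual c hc h0
    omega
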